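/- Let d ≥ 2, L > 0, T > 0, and let ω ⊆ Ω_L be measurable. Suppose that for each n ∈ ℕ there exist t_n ∈ ℝ and the parallelepiped Q_n := (0,2πL)^{d−1} × (t_n − n/2, t_n + n/2) ⊆ Ω_L such that |ω ∩ Q_n| < (2πL)^{d−1} n^{−1}, and set x_n := (πL,…,πL,t_n). Then ∫_ω exp(−‖x − x_n‖₂²/(2T)) dx → 0 as n → ∞. -/

import Mathlib

set_option maxHeartbeats 1000000


open MeasureTheory Filter

/-- The infinite strip `Ω_L = (0,2πL)^{d-1} × ℝ ⊆ ℝ^d`. -/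
def OmegaL (d : ℕ) (L : ℝ) : Set (EuclideanSpace ℝ (Fin d)) :=
  {x | ∀ j : Fin d, (j : ℕ) < d - 1 → x j ∈ Set.Ioo 0 (2 * Real.pi * L)}

/-- if `|ω ∩ Q_n| < (2πL)^{d-1}/n` for the boxes
`Q_n = (0,2πL)^{d-1} × (t_n - n/2, t_n + n/2)` with centres `x_n = (πL,…,πL,t_n)`, then
`∫_ω exp(-‖x - x_n‖²/(2T)) dx → 0` as `n → ∞`. -/
theorem stmt_8 (d : ℕ) (hd : 2 ≤ d) (L T : ℝ) (hL : 0 < L) (hT : 0 < T)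
    (ω : Set (EuclideanSpace ℝ (Fin d))) (hωm : MeasurableSet ω) (hωΩ : ω ⊆ OmegaL d L)
    (t : ℕ → ℝ)
    (hQ : ∀ n : ℕ, 0 < n →
      volume (ω ∩ (OmegaL d L ∩
          {x : EuclideanSpace ℝ (Fin d) |
            x ⟨d - 1, by omega⟩ ∈ Set.Ioo (t n - n / 2) (t n + n / 2)})) <
        ENNReal.ofReal ((2 * Real.pi * L) ^ (d - 1) / n))
    (xn : ℕ → EuclideanSpace ℝ (Fin d))
    (hxn : ∀ (n : ℕ) (j : Fin d),
      xn n j = if (j : ℕ) < d - 1 then Real.pi * L else t n) :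
    Tendsto (fun n : ℕ => ∫ x in ω, Real.exp (-‖x - xn n‖ ^ 2 / (2 * T)))
      atTop (nhds 0) := by
  have hd1 : d - 1 < d := by omega
  set e : Fin d := ⟨d - 1, hd1⟩ with he
  have h4T : (0:ℝ) < 4 * T := by linarith
  have hgauss : Integrable (fun v : EuclideanSpace ℝ (Fin d) =>
      Real.exp (-(1/(4*T)) * ‖v‖^2)) := by
    have h := (GaussianFourier.integrable_cexp_neg_mul_sq_norm_add
      (b := ((1/(4*T) : ℝ) : ℂ)) (by simpa using (by positivity : (0:ℝ) < 1/(4*T)))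
      0 (0 : EuclideanSpace ℝ (Fin d))).re
    refine h.congr (Filter.Eventually.of_forall fun v => ?_)
    simp [← Complex.ofReal_pow, ← Complex.ofReal_mul, ← Complex.ofReal_neg,
      ← Complex.ofReal_exp]
  set C : ℝ := ∫ v : EuclideanSpace ℝ (Fin d), Real.exp (-(1/(4*T)) * ‖v‖^2) with hC
  have hC0 : 0 ≤ C := integral_nonneg fun v => (Real.exp_pos _).le
  have hgaussn : ∀ n : ℕ, Integrable (fun x : EuclideanSpace ℝ (Fin d) =>
      Real.exp (-(1/(4*T)) * ‖x - xn n‖^2)) :=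
    fun n => hgauss.comp_sub_right (xn n)
  have hInt : ∀ n : ℕ, Integrable (fun x : EuclideanSpace ℝ (Fin d) =>
      Real.exp (-‖x - xn n‖^2 / (2*T))) := by
    intro n
    have h : Integrable (fun v : EuclideanSpace ℝ (Fin d) =>
        Real.exp (-(1/(2*T)) * ‖v‖^2)) := by
      have h := (GaussianFourier.integrable_cexp_neg_mul_sq_norm_add
        (b := ((1/(2*T) : ℝ) : ℂ)) (by simpa using (by positivity : (0:ℝ) < 1/(2*T)))
        0 (0 : EuclideanSpace ℝ (Fin d))).re
      refine h.congr (Filter.Eventually.of_forall fun v => ?_)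
      simp [← Complex.ofReal_pow, ← Complex.ofReal_mul, ← Complex.ofReal_neg,
        ← Complex.ofReal_exp]
    refine (h.comp_sub_right (xn n)).congr (Filter.Eventually.of_forall fun x => ?_)
    show Real.exp (-(1/(2*T)) * ‖x - xn n‖^2) = Real.exp (-‖x - xn n‖^2/(2*T))
    rw [neg_mul, neg_div, one_div, inv_mul_eq_div]
  have hcoord : ∀ n : ℕ, ∀ x : EuclideanSpace ℝ (Fin d),
      (x e - t n)^2 ≤ ‖x - xn n‖^2 := by
    intro n x
    have hxe : xn n e = t n := by rw [hxn]; simp [he]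
    have h1 : (x - xn n) e = x e - t n := by
      simp [← hxe]
    rw [EuclideanSpace.norm_eq, Real.sq_sqrt (by positivity), ← h1]
    calc ((x - xn n) e)^2 = ‖(x - xn n) e‖^2 := by rw [Real.norm_eq_abs, sq_abs]
      _ ≤ ∑ j, ‖(x - xn n) j‖^2 :=
        Finset.single_le_sum (f := fun j => ‖(x - xn n) j‖^2)
          (fun j _ => by positivity) (Finset.mem_univ e)
  have key : ∀ n : ℕ, 1 ≤ n →
      (∫ x in ω, Real.exp (-‖x - xn n‖^2 / (2*T))) ≤
        (2 * Real.pi * L)^(d-1) / n + Real.exp (-((n:ℝ)/2)^2/(4*T)) * C := by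
    intro n hn
    have hn' : (1:ℝ) ≤ (n:ℝ) := by exact_mod_cast hn
    set S : Set (EuclideanSpace ℝ (Fin d)) :=
      {x : EuclideanSpace ℝ (Fin d) | x e ∈ Set.Ioo (t n - n / 2) (t n + n / 2)} with hS
    have hSm : MeasurableSet S := by
      have : Measurable (fun x : EuclideanSpace ℝ (Fin d) => x e) :=
        (EuclideanSpace.proj e).continuous.measurable
      exact this measurableSet_Ioo
    have hsub : ω ∩ (OmegaL d L ∩ S) = ω ∩ S := by
      ext x; constructor
      · rintro ⟨hx, _, hx2⟩; exact ⟨hx, hx2⟩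
      · rintro ⟨hx, hx2⟩; exact ⟨hx, hωΩ hx, hx2⟩
    have hμ : volume (ω ∩ S) < ENNReal.ofReal ((2 * Real.pi * L)^(d-1) / n) := by
      have := hQ n (by omega); rwa [hsub] at this
    have hfin : volume (ω ∩ S) < ⊤ := hμ.trans_le le_top
    have hrhs0 : (0:ℝ) ≤ (2 * Real.pi * L)^(d-1) / n := by positivity
    have hsplit : (∫ x in ω, Real.exp (-‖x - xn n‖^2 / (2*T))) =
        (∫ x in ω ∩ S, Real.exp (-‖x - xn n‖^2 / (2*T))) +
        ∫ x in ω \ S, Real.exp (-‖x - xn n‖^2 / (2*T)) := by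
      rw [← setIntegral_union (Set.disjoint_sdiff_right.mono_left Set.inter_subset_right)
        (hωm.diff hSm) ((hInt n).integrableOn) ((hInt n).integrableOn),
        Set.inter_union_diff]
    rw [hsplit]
    have hb1 : (∫ x in ω ∩ S, Real.exp (-‖x - xn n‖^2 / (2*T))) ≤
        (2 * Real.pi * L)^(d-1) / n := by
      have hbound : ∀ x ∈ ω ∩ S, ‖Real.exp (-‖x - xn n‖^2 / (2*T))‖ ≤ 1 := by
        intro x _
        rw [Real.norm_eq_abs, abs_of_pos (Real.exp_pos _)]
        apply Real.exp_le_one_iff.mpr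
        apply div_nonpos_of_nonpos_of_nonneg (neg_nonpos.mpr (by positivity)) (by linarith)
      calc (∫ x in ω ∩ S, Real.exp (-‖x - xn n‖^2 / (2*T)))
          ≤ ‖∫ x in ω ∩ S, Real.exp (-‖x - xn n‖^2 / (2*T))‖ := le_abs_self _
        _ ≤ 1 * (volume (ω ∩ S)).toReal :=
            norm_setIntegral_le_of_norm_le_const hfin hbound
        _ ≤ (2 * Real.pi * L)^(d-1) / n := by
            rw [one_mul]
            exact ENNReal.toReal_le_of_le_ofReal hrhs0 hμ.le
    have hb2 : (∫ x in ω \ S, Real.exp (-‖x - xn n‖^2 / (2*T))) ≤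
        Real.exp (-((n:ℝ)/2)^2/(4*T)) * C := by
      have hpt : ∀ x ∈ ω \ S, Real.exp (-‖x - xn n‖^2 / (2*T)) ≤
          Real.exp (-((n:ℝ)/2)^2/(4*T)) * Real.exp (-(1/(4*T)) * ‖x - xn n‖^2) := by
        intro x hx
        have hxS : x e ∉ Set.Ioo (t n - n / 2) (t n + n / 2) := hx.2
        have habs : (n:ℝ)/2 ≤ |x e - t n| := by
          rw [Set.mem_Ioo, not_and_or] at hxS
          rcases hxS with h | h
          · push_neg at h
            rw [abs_sub_comm, abs_of_nonneg (by linarith)]; linarith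
          · push_neg at h
            rw [abs_of_nonneg (by linarith)]; linarith
        have hsq : ((n:ℝ)/2)^2 ≤ ‖x - xn n‖^2 := by
          calc ((n:ℝ)/2)^2 ≤ |x e - t n|^2 := by
                apply pow_le_pow_left₀ (by positivity) habs
            _ = (x e - t n)^2 := sq_abs _
            _ ≤ ‖x - xn n‖^2 := hcoord n x
        have h' : -‖x - xn n‖^2/(4*T) ≤ -((n:ℝ)/2)^2/(4*T) :=
          (div_le_div_iff_of_pos_right h4T).mpr (neg_le_neg hsq)
        calc Real.exp (-‖x - xn n‖^2 / (2*T))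
            = Real.exp (-‖x - xn n‖^2/(4*T)) * Real.exp (-(1/(4*T)) * ‖x - xn n‖^2) := by
              rw [← Real.exp_add]; congr 1; field_simp; ring
          _ ≤ Real.exp (-((n:ℝ)/2)^2/(4*T)) * Real.exp (-(1/(4*T)) * ‖x - xn n‖^2) :=
              mul_le_mul_of_nonneg_right (Real.exp_le_exp.mpr h') (Real.exp_pos _).le
      calc (∫ x in ω \ S, Real.exp (-‖x - xn n‖^2 / (2*T)))
          ≤ ∫ x in ω \ S, Real.exp (-((n:ℝ)/2)^2/(4*T)) *
              Real.exp (-(1/(4*T)) * ‖x - xn n‖^2) :=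
            setIntegral_mono_on ((hInt n).integrableOn)
              (((hgaussn n).const_mul _).integrableOn) (hωm.diff hSm) hpt
        _ ≤ ∫ x : EuclideanSpace ℝ (Fin d), Real.exp (-((n:ℝ)/2)^2/(4*T)) *
              Real.exp (-(1/(4*T)) * ‖x - xn n‖^2) :=
            setIntegral_le_integral ((hgaussn n).const_mul _)
              (Filter.Eventually.of_forall fun x => by positivity)
        _ = Real.exp (-((n:ℝ)/2)^2/(4*T)) * C := by
            rw [integral_const_mul, hC]
            congr 1
            exact integral_sub_right_eq_self
              (fun v : EuclideanSpace ℝ (Fin d) => Real.exp (-(1/(4*T)) * ‖v‖^2)) (xn n)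
    linarith
  have hub : Tendsto (fun n : ℕ => (2 * Real.pi * L)^(d-1) / n +
      Real.exp (-((n:ℝ)/2)^2/(4*T)) * C) atTop (nhds 0) := by
    have h1 := tendsto_const_div_atTop_nhds_zero_nat ((2 * Real.pi * L)^(d-1))
    have h2 : Tendsto (fun n : ℕ => -((n:ℝ)/2)^2/(4*T)) atTop atBot := by
      have ha : Tendsto (fun n : ℕ => ((n:ℝ)/2)^2/(4*T)) atTop atTop := by
        apply Tendsto.atTop_div_const h4T
        exact (tendsto_pow_atTop (n := 2) two_ne_zero).comp
          (Tendsto.atTop_div_const two_pos tendsto_natCast_atTop_atTop)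
      have := tendsto_neg_atTop_atBot.comp ha
      refine this.congr fun n => ?_
      simp [Function.comp, neg_div]
    have h3 : Tendsto (fun n : ℕ => Real.exp (-((n:ℝ)/2)^2/(4*T)) * C) atTop (nhds 0) := by
      have := (Real.tendsto_exp_atBot.comp h2).mul_const C
      simpa using this
    simpa using h1.add h3
  exact squeeze_zero'
    (Filter.Eventually.of_forall fun n =>
      integral_nonneg fun x => (Real.exp_pos _).le)
    (Filter.eventually_atTop.mpr ⟨1, key⟩) hub
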